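/- In the mixed Deffuant model, assume liminf_{t→∞} μ(t) > 0. Then for every δ > 0, almost surely there exists a time t ≥ 0 such that every pair {i,j} ∈ E(t) ∩ 𝓔(t) satisfies ‖x_i(t) − x_j(t)‖ ≤ δ; that is, τ_δ := inf{ t ≥ 0 : ‖x_i(t) − x_j(t)‖ ≤ δ for all {i,j} ∈ E(t) ∩ 𝓔(t) } is finite almost surely. -/

import Mathlib

open MeasureTheory ProbabilityTheory Filter
open scoped ENNReal

open scoped Classical in
/-- One step of the mixed Deffuant model: given confidence threshold `ε`, convergence
parameter `μt`, social edge set `Et` and selected (unordered) pair `p`, each endpoint of `p`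
moves toward the other at rate `μt` provided `p` is a social edge and the two opinions are
within distance `ε`; all other agents keep their opinion. -/
noncomputable def deffuantStep {V W : Type*} [NormedAddCommGroup W] [NormedSpace ℝ W]
    (ε μt : ℝ) (Et : Set (Sym2 V)) (p : Sym2 V) (x : V → W) : V → W :=
  fun k =>
    if h : k ∈ p then
      if p ∈ Et ∧ ‖x k - x (Sym2.Mem.other h)‖ ≤ ε then
        x k + μt • (x (Sym2.Mem.other h) - x k)
      else x k
    else x k

/-- The trajectory of the mixed Deffuant model with confidence threshold `ε`, convergence
parameters `μ`, social edge sets `E`, selected pairs `e` and initial opinions `x0`. -/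
noncomputable def deffuantTraj {V W : Type*} [NormedAddCommGroup W] [NormedSpace ℝ W]
    (ε : ℝ) (μ : ℕ → ℝ) (E : ℕ → Set (Sym2 V)) (e : ℕ → Sym2 V) (x0 : V → W) :
    ℕ → V → W
  | 0 => x0
  | t + 1 => deffuantStep ε (μ t) (E t) (e t) (deffuantTraj ε μ E e x0 t)

section Det
open scoped Classical

variable {V W : Type*} [NormedAddCommGroup W] [NormedSpace ℝ W]

lemma sym2_other_eq {i j : V} (h : i ∈ s(i, j)) : Sym2.Mem.other h = j := by
  have := Sym2.other_spec h
  rwa [Sym2.congr_right] at this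

lemma deffuantStep_fst (ε μt : ℝ) (Et : Set (Sym2 V)) (i j : V) (x : V → W) :
    deffuantStep ε μt Et s(i, j) x i =
      if s(i, j) ∈ Et ∧ ‖x i - x j‖ ≤ ε then x i + μt • (x j - x i) else x i := by
  have h : i ∈ s(i, j) := Sym2.mem_mk_left i j
  rw [deffuantStep, dif_pos h, sym2_other_eq h]

lemma deffuantStep_snd (ε μt : ℝ) (Et : Set (Sym2 V)) (i j : V) (x : V → W) :
    deffuantStep ε μt Et s(i, j) x j =
      if s(i, j) ∈ Et ∧ ‖x i - x j‖ ≤ ε then x j + μt • (x i - x j) else x j := by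
  have h := deffuantStep_fst ε μt Et j i x
  rw [Sym2.eq_swap] at h
  rw [h, norm_sub_rev]

lemma deffuantStep_other (ε μt : ℝ) (Et : Set (Sym2 V)) (p : Sym2 V) (x : V → W)
    {k : V} (hk : k ∉ p) : deffuantStep ε μt Et p x k = x k := by
  rw [deffuantStep, dif_neg hk]

end Det

section Energy
open scoped Classical
variable {V : Type*} [Fintype V] {W : Type*} [NormedAddCommGroup W] [InnerProductSpace ℝ W]

/-- Total "energy" of an opinion profile. -/
noncomputable def deffuantEnergy (x : V → W) : ℝ := ∑ k, ‖x k‖ ^ 2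

lemma deffuantEnergy_nonneg (x : V → W) : 0 ≤ deffuantEnergy x :=
  Finset.sum_nonneg fun k _ => by positivity

lemma energy_pair_identity (μt : ℝ) (a b : W) :
    ‖a + μt • (b - a)‖ ^ 2 + ‖b + μt • (a - b)‖ ^ 2
      = ‖a‖ ^ 2 + ‖b‖ ^ 2 - 2 * μt * (1 - μt) * ‖a - b‖ ^ 2 := by
  have h1 : ‖a + μt • (b - a)‖ ^ 2
      = ‖a‖ ^ 2 + 2 * (μt * inner ℝ a (b - a)) + μt ^ 2 * ‖b - a‖ ^ 2 := by
    rw [norm_add_sq_real, real_inner_smul_right, norm_smul, mul_pow, Real.norm_eq_abs, sq_abs]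
  have h2 : ‖b + μt • (a - b)‖ ^ 2
      = ‖b‖ ^ 2 + 2 * (μt * inner ℝ b (a - b)) + μt ^ 2 * ‖a - b‖ ^ 2 := by
    rw [norm_add_sq_real, real_inner_smul_right, norm_smul, mul_pow, Real.norm_eq_abs, sq_abs]
  have h3 : ‖b - a‖ = ‖a - b‖ := norm_sub_rev b a
  have h4 : inner ℝ a (b - a) + inner ℝ b (a - b) = -(‖a - b‖ ^ 2) := by
    have : inner ℝ (a - b) (a - b) = ‖a - b‖ ^ 2 := real_inner_self_eq_norm_sq (a - b)
    have e1 : inner ℝ a (b - a) = (inner ℝ a b : ℝ) - inner ℝ a a := inner_sub_right a b a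
    have e2 : inner ℝ b (a - b) = (inner ℝ b a : ℝ) - inner ℝ b b := inner_sub_right b a b
    have e3 : inner ℝ (a - b) (a - b) = (inner ℝ a a : ℝ) - inner ℝ a b - (inner ℝ b a - inner ℝ b b) := by
      rw [inner_sub_left, inner_sub_right, inner_sub_right]
    linarith [this, e1, e2, e3]
  rw [h1, h2, h3]
  linear_combination 2 * μt * h4

lemma deffuantEnergy_step_update {ε μt : ℝ} {Et : Set (Sym2 V)} {i j : V} (hij : i ≠ j)
    (x : V → W) (hcond : s(i, j) ∈ Et ∧ ‖x i - x j‖ ≤ ε) :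
    deffuantEnergy (deffuantStep ε μt Et s(i, j) x)
      = deffuantEnergy x - 2 * μt * (1 - μt) * ‖x i - x j‖ ^ 2 := by
  have hsub : ({i, j} : Finset V) ⊆ Finset.univ := Finset.subset_univ _
  rw [deffuantEnergy, deffuantEnergy, ← Finset.sum_compl_add_sum ({i, j} : Finset V),
    ← Finset.sum_compl_add_sum ({i, j} : Finset V) (fun k => ‖x k‖ ^ 2)]
  have hoff : ∀ k ∈ ({i, j} : Finset V)ᶜ,
      ‖deffuantStep ε μt Et s(i, j) x k‖ ^ 2 = ‖x k‖ ^ 2 := by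
    intro k hk
    rw [Finset.mem_compl, Finset.mem_insert, Finset.mem_singleton] at hk
    push_neg at hk
    rw [deffuantStep_other]
    rw [Sym2.mem_iff]
    tauto
  rw [Finset.sum_congr rfl hoff, Finset.sum_pair hij, Finset.sum_pair hij,
    deffuantStep_fst, deffuantStep_snd, if_pos hcond, if_pos hcond,
    energy_pair_identity]
  ring

lemma deffuantStep_eq_of_not_cond {ε μt : ℝ} {Et : Set (Sym2 V)} {i j : V}
    (x : V → W) (hcond : ¬(s(i, j) ∈ Et ∧ ‖x i - x j‖ ≤ ε)) :
    deffuantStep ε μt Et s(i, j) x = x := by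
  funext k
  by_cases hk : k ∈ s(i, j)
  · rw [Sym2.mem_iff] at hk
    rcases hk with rfl | rfl
    · rw [deffuantStep_fst, if_neg hcond]
    · rw [deffuantStep_snd, if_neg hcond]
  · exact deffuantStep_other _ _ _ _ _ hk

lemma deffuantStep_diag (ε μt : ℝ) (Et : Set (Sym2 V)) (i : V) (x : V → W) :
    deffuantStep ε μt Et s(i, i) x = x := by
  funext k
  by_cases hk : k ∈ s(i, i)
  · have hki : k = i := by rw [Sym2.mem_iff] at hk; tauto
    subst hki
    rw [deffuantStep_fst]
    simp
  · exact deffuantStep_other _ _ _ _ _ hk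

lemma deffuantEnergy_step_le {ε μt : ℝ} (hμ : μt ∈ Set.Icc (0:ℝ) (1/2))
    (Et : Set (Sym2 V)) (p : Sym2 V) (x : V → W) :
    deffuantEnergy (deffuantStep ε μt Et p x) ≤ deffuantEnergy x := by
  induction p using Sym2.ind with
  | _ i j =>
    by_cases hij : i = j
    · subst hij; rw [deffuantStep_diag]
    · by_cases hcond : s(i, j) ∈ Et ∧ ‖x i - x j‖ ≤ ε
      · rw [deffuantEnergy_step_update hij x hcond]
        have h0 : 0 ≤ 2 * μt * (1 - μt) * ‖x i - x j‖ ^ 2 := by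
          have : (0:ℝ) ≤ 1 - μt := by linarith [hμ.2]
          have := mul_nonneg (mul_nonneg (by linarith [hμ.1] : (0:ℝ) ≤ 2 * μt) this)
            (sq_nonneg ‖x i - x j‖)
          linarith
        linarith
      · rw [deffuantStep_eq_of_not_cond x hcond]

lemma deffuantEnergy_step_drop {ε μt c δ : ℝ} (hμ : μt ∈ Set.Icc (0:ℝ) (1/2))
    (hc : c ≤ μt) (hc0 : 0 ≤ c) (hδ : 0 ≤ δ) {Et : Set (Sym2 V)} {i j : V} (hij : i ≠ j)
    {x : V → W} (hmem : s(i, j) ∈ Et) (hlow : δ < ‖x i - x j‖) (hup : ‖x i - x j‖ ≤ ε) :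
    deffuantEnergy (deffuantStep ε μt Et s(i, j) x)
      ≤ deffuantEnergy x - c * δ ^ 2 := by
  rw [deffuantEnergy_step_update hij x ⟨hmem, hup⟩]
  have h1 : δ ^ 2 ≤ ‖x i - x j‖ ^ 2 := by nlinarith
  have e1 : c * δ ^ 2 ≤ μt * δ ^ 2 := mul_le_mul_of_nonneg_right hc (sq_nonneg δ)
  have e2 : μt * δ ^ 2 ≤ μt * ‖x i - x j‖ ^ 2 :=
    mul_le_mul_of_nonneg_left h1 (le_trans hc0 hc)
  have e3 : μt * ‖x i - x j‖ ^ 2 ≤ 2 * μt * (1 - μt) * ‖x i - x j‖ ^ 2 := by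
    have h12 : (0:ℝ) ≤ 1 - 2 * μt := by linarith [hμ.2]
    nlinarith [mul_nonneg (mul_nonneg hμ.1 h12) (sq_nonneg ‖x i - x j‖)]
  linarith

end Energy

section Traj
open scoped Classical
variable {V : Type*} [Fintype V] {W : Type*} [NormedAddCommGroup W] [InnerProductSpace ℝ W]
variable (ε : ℝ) (μ : ℕ → ℝ) (E : ℕ → Set (Sym2 V)) (x0 : V → W)

lemma deffuantTraj_congr {v v' : ℕ → Sym2 V} :
    ∀ {t : ℕ}, (∀ s < t, v s = v' s) →
      deffuantTraj ε μ E v x0 t = deffuantTraj ε μ E v' x0 t := by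
  intro t
  induction t with
  | zero => intro; rfl
  | succ t ih =>
    intro h
    have h1 : deffuantTraj ε μ E v x0 t = deffuantTraj ε μ E v' x0 t :=
      ih fun s hs => h s (hs.trans (Nat.lt_succ_self t))
    show deffuantStep _ _ _ _ _ = deffuantStep _ _ _ _ _
    rw [h1, h t (Nat.lt_succ_self t)]

lemma deffuantEnergy_traj_mono (hμ : ∀ t, μ t ∈ Set.Icc (0:ℝ) (1/2)) (v : ℕ → Sym2 V)
    {s t : ℕ} (hst : s ≤ t) :
    deffuantEnergy (deffuantTraj ε μ E v x0 t) ≤ deffuantEnergy (deffuantTraj ε μ E v x0 s) := by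
  induction t with
  | zero => rw [Nat.le_zero.mp hst]
  | succ t ih =>
    rcases Nat.lt_succ_iff_lt_or_eq.mp (Nat.lt_succ_of_le hst) with h | h
    · calc deffuantEnergy (deffuantTraj ε μ E v x0 (t + 1))
          ≤ deffuantEnergy (deffuantTraj ε μ E v x0 t) :=
            deffuantEnergy_step_le (hμ t) _ _ _
        _ ≤ _ := ih (Nat.lt_succ_iff.mp h)
    · rw [h]

/-- At time `t` the selected pair `v t` is a social edge whose endpoints' opinions are at
distance in `(δ, ε]`; this forces an energy drop. -/
def goodDrop (δ : ℝ) (t : ℕ) (v : ℕ → Sym2 V) : Prop :=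
  ∃ i j : V, i ≠ j ∧ v t = s(i, j) ∧ s(i, j) ∈ E t ∧
    δ < ‖deffuantTraj ε μ E v x0 t i - deffuantTraj ε μ E v x0 t j‖ ∧
    ‖deffuantTraj ε μ E v x0 t i - deffuantTraj ε μ E v x0 t j‖ ≤ ε

lemma deffuant_drop_count (hμ : ∀ t, μ t ∈ Set.Icc (0:ℝ) (1/2)) {c δ : ℝ}
    (hc0 : 0 ≤ c) (hδ : 0 ≤ δ) {T0 : ℕ} (hcμ : ∀ t, T0 ≤ t → c ≤ μ t)
    (v : ℕ → Sym2 V) (L : ℕ) :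
    (((Finset.range L).filter (fun t => goodDrop ε μ E x0 δ (T0 + t) v)).card : ℝ)
        * (c * δ ^ 2) ≤ deffuantEnergy x0 := by
  have key : ∀ L : ℕ,
      deffuantEnergy (deffuantTraj ε μ E v x0 (T0 + L))
        ≤ deffuantEnergy (deffuantTraj ε μ E v x0 T0)
          - (((Finset.range L).filter (fun t => goodDrop ε μ E x0 δ (T0 + t) v)).card : ℝ)
            * (c * δ ^ 2) := by
    intro L
    induction L with
    | zero => simp
    | succ L ih =>
      have hstep : deffuantTraj ε μ E v x0 (T0 + (L + 1))
          = deffuantStep ε (μ (T0 + L)) (E (T0 + L)) (v (T0 + L))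
              (deffuantTraj ε μ E v x0 (T0 + L)) := rfl
      rw [Finset.range_add_one, Finset.filter_insert]
      by_cases hg : goodDrop ε μ E x0 δ (T0 + L) v
      · obtain ⟨i, j, hij, hvt, hmem, hlow, hup⟩ := hg
        have hdrop : deffuantEnergy (deffuantTraj ε μ E v x0 (T0 + (L + 1)))
            ≤ deffuantEnergy (deffuantTraj ε μ E v x0 (T0 + L)) - c * δ ^ 2 := by
          rw [hstep, hvt]
          exact deffuantEnergy_step_drop (hμ _) (hcμ _ (Nat.le_add_right _ _)) hc0 hδ hij
            hmem hlow hup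
        have hgd : goodDrop ε μ E x0 δ (T0 + L) v := ⟨i, j, hij, hvt, hmem, hlow, hup⟩
        rw [if_pos hgd, Finset.card_insert_of_notMem (by simp)]
        push_cast
        linarith
      · rw [if_neg hg]
        have : deffuantEnergy (deffuantTraj ε μ E v x0 (T0 + (L + 1)))
            ≤ deffuantEnergy (deffuantTraj ε μ E v x0 (T0 + L)) :=
          deffuantEnergy_traj_mono ε μ E x0 hμ v (Nat.le_succ _)
        linarith
  have h1 := key L
  have h2 : deffuantEnergy (deffuantTraj ε μ E v x0 T0) ≤ deffuantEnergy x0 :=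
    deffuantEnergy_traj_mono ε μ E x0 hμ v (Nat.zero_le _)
  have h3 : 0 ≤ deffuantEnergy (deffuantTraj ε μ E v x0 (T0 + L)) :=
    deffuantEnergy_nonneg _
  linarith

end Traj

section Prob
open scoped Classical
variable {V : Type*} [Fintype V] {Ω : Type*} [MeasurableSpace Ω]

lemma deffuant_cyl_measure (P : Measure Ω) [IsProbabilityMeasure P] (e : ℕ → Ω → Sym2 V)
    (hmeas : ∀ t, @Measurable Ω (Sym2 V) _ ⊤ (e t))
    (hindep : iIndepFun (m := fun _ : ℕ => (⊤ : MeasurableSpace (Sym2 V))) e P)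
    (t : ℕ) (w : Fin t → Sym2 V) (A : Set (Sym2 V)) :
    P ((⋂ i : Fin t, e i ⁻¹' {w i}) ∩ e t ⁻¹' A)
      = P (⋂ i : Fin t, e i ⁻¹' {w i}) * P (e t ⁻¹' A) := by
  set sets : ℕ → Set (Sym2 V) := fun i => if h : i < t then {w ⟨i, h⟩} else A with hsets
  have hcyl : (⋂ i : Fin t, e i ⁻¹' {w i}) = ⋂ i ∈ Finset.range t, e i ⁻¹' sets i := by
    ext ω
    simp only [Set.mem_iInter, Finset.mem_range, Set.mem_preimage]
    constructor
    · intro h i hi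
      rw [hsets]; simp only [dif_pos hi]; exact h ⟨i, hi⟩
    · intro h i
      have h2 := h i i.2
      rw [hsets] at h2
      simp only [dif_pos i.2] at h2
      exact h2
  have h1 := hindep.measure_inter_preimage_eq_mul (Finset.range (t + 1)) (sets := sets)
    (fun i _ => trivial)
  have h2 := hindep.measure_inter_preimage_eq_mul (Finset.range t) (sets := sets)
    (fun i _ => trivial)
  have hsplit : (⋂ i ∈ Finset.range (t + 1), e i ⁻¹' sets i)
      = (⋂ i ∈ Finset.range t, e i ⁻¹' sets i) ∩ e t ⁻¹' A := by
    rw [Finset.range_add_one, Finset.set_biInter_insert]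
    rw [show sets t = A by rw [hsets]; simp]
    exact Set.inter_comm _ _
  rw [hsplit] at h1
  rw [Finset.prod_range_succ] at h1
  rw [hcyl, h1, h2]
  rw [show sets t = A by rw [hsets]; simp]

lemma deffuant_key_estimate (P : Measure Ω) [IsProbabilityMeasure P] (e : ℕ → Ω → Sym2 V)
    (hmeas : ∀ t, @Measurable Ω (Sym2 V) _ ⊤ (e t))
    (hindep : iIndepFun (m := fun _ : ℕ => (⊤ : MeasurableSpace (Sym2 V))) e P)
    {N : ℕ} (hunif : ∀ t, ∀ p : Sym2 V, ¬ p.IsDiag → P {ω | e t ω = p} = ((N : ℝ≥0∞))⁻¹)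
    (t : ℕ) (C : (ℕ → Sym2 V) → Prop) (σ : (ℕ → Sym2 V) → Sym2 V) (p₀ : Sym2 V)
    (hC : ∀ v v' : ℕ → Sym2 V, (∀ s < t, v s = v' s) → C v → C v')
    (hσ : ∀ v v' : ℕ → Sym2 V, (∀ s < t, v s = v' s) → σ v = σ v')
    (hnd : ∀ v, ¬ (σ v).IsDiag) :
    P {ω | C (fun s => e s ω) ∧ ¬ (e t ω = σ (fun s => e s ω))}
      ≤ (1 - (N : ℝ≥0∞)⁻¹) * P {ω | C (fun s => e s ω)} := by
  set q : ℝ≥0∞ := (N : ℝ≥0∞)⁻¹ with hq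
  set ext : (Fin t → Sym2 V) → ℕ → Sym2 V :=
    fun w s => if h : s < t then w ⟨s, h⟩ else p₀ with hext
  set Cyl : (Fin t → Sym2 V) → Set Ω := fun w => ⋂ i : Fin t, e i ⁻¹' {w i} with hCyl
  have hCylMeas : ∀ w, MeasurableSet (Cyl w) := fun w =>
    MeasurableSet.iInter fun i => hmeas i (by trivial)
  have hagree : ∀ (ω : Ω) (w : Fin t → Sym2 V), ω ∈ Cyl w →
      ∀ s < t, e s ω = ext w s := by
    intro ω w hw s hs
    rw [hext]
    simp only [dif_pos hs]
    have := Set.mem_iInter.mp hw ⟨s, hs⟩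
    exact this
  set S : Finset (Fin t → Sym2 V) := Finset.univ.filter (fun w => C (ext w)) with hS
  have hU : {ω | C (fun s => e s ω)} = ⋃ w ∈ S, Cyl w := by
    ext ω
    simp only [Set.mem_setOf_eq, Set.mem_iUnion, hS, Finset.mem_filter, Finset.mem_univ,
      true_and]
    constructor
    · intro h
      refine ⟨fun i => e i ω, ?_, ?_⟩
      · refine hC _ _ ?_ h
        intro s hs
        rw [hext]
        simp [dif_pos hs]
      · exact Set.mem_iInter.mpr fun i => rfl
    · rintro ⟨w, hw, hmem⟩
      exact hC _ _ (fun s hs => (hagree ω w hmem s hs).symm) hw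
  have hU2 : {ω | C (fun s => e s ω) ∧ ¬ (e t ω = σ (fun s => e s ω))}
      = ⋃ w ∈ S, (Cyl w ∩ e t ⁻¹' {σ (ext w)}ᶜ) := by
    ext ω
    simp only [Set.mem_setOf_eq, Set.mem_iUnion, hS, Finset.mem_filter, Finset.mem_univ,
      true_and, Set.mem_inter_iff, Set.mem_preimage, Set.mem_compl_iff,
      Set.mem_singleton_iff]
    constructor
    · rintro ⟨h1, h2⟩
      refine ⟨fun i => e i ω, ?_, Set.mem_iInter.mpr fun i => rfl, ?_⟩
      · refine hC _ _ ?_ h1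
        intro s hs
        rw [hext]; simp [dif_pos hs]
      · intro hcontra
        apply h2
        rw [hcontra]
        apply hσ
        intro s hs
        rw [hext]; simp [dif_pos hs]
    · rintro ⟨w, hw, hmem, hne⟩
      refine ⟨hC _ _ (fun s hs => (hagree ω w hmem s hs).symm) hw, ?_⟩
      intro hcontra
      apply hne
      rw [← hσ _ _ (hagree ω w hmem)]
      exact hcontra
  have hdisj : (S : Set (Fin t → Sym2 V)).PairwiseDisjoint
      (fun w => Cyl w ∩ e t ⁻¹' {σ (ext w)}ᶜ) := by
    intro w _ w' _ hww'
    refine Set.disjoint_left.mpr ?_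
    rintro ω ⟨hω, -⟩ ⟨hω', -⟩
    apply hww'
    funext i
    have h1 := Set.mem_iInter.mp hω i
    have h2 := Set.mem_iInter.mp hω' i
    rw [Set.mem_preimage, Set.mem_singleton_iff] at h1 h2
    rw [← h1, ← h2]
  have hdisj' : (S : Set (Fin t → Sym2 V)).PairwiseDisjoint Cyl := by
    intro w _ w' _ hww'
    refine Set.disjoint_left.mpr ?_
    rintro ω hω hω'
    apply hww'
    funext i
    have h1 := Set.mem_iInter.mp hω i
    have h2 := Set.mem_iInter.mp hω' i
    rw [Set.mem_preimage, Set.mem_singleton_iff] at h1 h2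
    rw [← h1, ← h2]
  have hcompl : ∀ p : Sym2 V, ¬ p.IsDiag → P (e t ⁻¹' {p}ᶜ) = 1 - q := by
    intro p hp
    have hsingle : e t ⁻¹' {p} = {ω | e t ω = p} := by
      ext ω; simp
    have : P (e t ⁻¹' {p}ᶜ) = 1 - P (e t ⁻¹' {p}) := by
      rw [Set.preimage_compl, measure_compl (hmeas t (by trivial)) (measure_ne_top P _),
        measure_univ]
    rw [this, hsingle, hunif t p hp, hq]
  calc P {ω | C (fun s => e s ω) ∧ ¬ (e t ω = σ (fun s => e s ω))}
      = ∑ w ∈ S, P (Cyl w ∩ e t ⁻¹' {σ (ext w)}ᶜ) := by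
        rw [hU2, measure_biUnion_finset hdisj
          (fun w _ => (hCylMeas w).inter (hmeas t (by trivial)))]
    _ = ∑ w ∈ S, P (Cyl w) * (1 - q) := by
        refine Finset.sum_congr rfl fun w _ => ?_
        rw [deffuant_cyl_measure P e hmeas hindep t w _, hcompl _ (hnd _)]
    _ = (1 - q) * ∑ w ∈ S, P (Cyl w) := by
        rw [Finset.mul_sum]
        exact Finset.sum_congr rfl fun w _ => mul_comm _ _
    _ = (1 - q) * P {ω | C (fun s => e s ω)} := by
        rw [hU, measure_biUnion_finset hdisj' (fun w _ => hCylMeas w)]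
    _ ≤ (1 - q) * P {ω | C (fun s => e s ω)} := le_rfl

end Prob

section Sel
open scoped Classical
variable {V : Type*} [Fintype V] {W : Type*} [NormedAddCommGroup W] [InnerProductSpace ℝ W]

/-- There is a "long" profile edge at time `t` in state `x`. -/
def longS (E : ℕ → Set (Sym2 V)) (δ ε : ℝ) (t : ℕ) (x : V → W) : Prop :=
  ∃ i j : V, s(i, j) ∈ E t ∧ δ < ‖x i - x j‖ ∧ ‖x i - x j‖ ≤ ε

def selCond (E : ℕ → Set (Sym2 V)) (δ ε : ℝ) (t : ℕ) (x : V → W) : Prop :=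
  ∃ p : Sym2 V, ∃ i j : V, i ≠ j ∧ p = s(i, j) ∧ s(i, j) ∈ E t ∧
    δ < ‖x i - x j‖ ∧ ‖x i - x j‖ ≤ ε

/-- A chosen long profile edge (or a default non-diagonal pair). -/
noncomputable def selEdge (E : ℕ → Set (Sym2 V)) (δ ε : ℝ) (p₀ : Sym2 V) (t : ℕ)
    (x : V → W) : Sym2 V :=
  if h : selCond E δ ε t x then h.choose else p₀

lemma selEdge_not_isDiag (E : ℕ → Set (Sym2 V)) (δ ε : ℝ) {p₀ : Sym2 V}
    (hp₀ : ¬ p₀.IsDiag) (t : ℕ) (x : V → W) : ¬ (selEdge E δ ε p₀ t x).IsDiag := by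
  rw [selEdge]
  split_ifs with h
  · obtain ⟨i, j, hij, hchoose, -⟩ := h.choose_spec
    rw [hchoose, Sym2.mk_isDiag_iff]
    exact hij
  · exact hp₀

lemma longS_selCond {E : ℕ → Set (Sym2 V)} {δ ε : ℝ} (hδ : 0 < δ) {t : ℕ} {x : V → W}
    (h : longS E δ ε t x) : selCond E δ ε t x := by
  obtain ⟨i, j, hmem, hlow, hup⟩ := h
  have hij : i ≠ j := by
    rintro rfl
    rw [sub_self, norm_zero] at hlow
    exact absurd hlow (not_lt.mpr hδ.le)
  exact ⟨s(i, j), i, j, hij, rfl, hmem, hlow, hup⟩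

lemma selEdge_goodDrop (ε : ℝ) (μ : ℕ → ℝ) (E : ℕ → Set (Sym2 V)) (x0 : V → W)
    {δ : ℝ} (hδ : 0 < δ) {p₀ : Sym2 V} {t : ℕ} {v : ℕ → Sym2 V}
    (hlong : longS E δ ε t (deffuantTraj ε μ E v x0 t))
    (hsel : v t = selEdge E δ ε p₀ t (deffuantTraj ε μ E v x0 t)) :
    goodDrop ε μ E x0 δ t v := by
  have hcond := longS_selCond hδ hlong
  rw [selEdge, dif_pos hcond] at hsel
  obtain ⟨i, j, hij, hchoose, hmem, hlow, hup⟩ := hcond.choose_spec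
  exact ⟨i, j, hij, by rw [hsel, hchoose], hmem, hlow, hup⟩

/-- The event that the profile has a long edge at each of the first `L` times after `T0`,
while at most `k` of the selected pairs up to then were the chosen long edges. -/
def dSeq (ε : ℝ) (μ : ℕ → ℝ) (E : ℕ → Set (Sym2 V)) (x0 : V → W) (δ : ℝ) (p₀ : Sym2 V)
    (T0 L k : ℕ) (v : ℕ → Sym2 V) : Prop :=
  (∀ s < L, longS E δ ε (T0 + s) (deffuantTraj ε μ E v x0 (T0 + s))) ∧
  ((Finset.range L).filter
    (fun s => v (T0 + s)
      = selEdge E δ ε p₀ (T0 + s) (deffuantTraj ε μ E v x0 (T0 + s)))).card ≤ k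

lemma dSeq_congr (ε : ℝ) (μ : ℕ → ℝ) (E : ℕ → Set (Sym2 V)) (x0 : V → W) (δ : ℝ)
    (p₀ : Sym2 V) (T0 L k : ℕ) {v v' : ℕ → Sym2 V} (h : ∀ s < T0 + L, v s = v' s)
    (hd : dSeq ε μ E x0 δ p₀ T0 L k v) : dSeq ε μ E x0 δ p₀ T0 L k v' := by
  have htraj : ∀ s < L + 1, deffuantTraj ε μ E v x0 (T0 + s) = deffuantTraj ε μ E v' x0 (T0 + s) := by
    intro s hs
    exact deffuantTraj_congr ε μ E x0 fun u hu => h u (by omega)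
  obtain ⟨h1, h2⟩ := hd
  constructor
  · intro s hs
    rw [← htraj s (by omega)]
    exact h1 s hs
  · have : ((Finset.range L).filter
        (fun s => v' (T0 + s)
          = selEdge E δ ε p₀ (T0 + s) (deffuantTraj ε μ E v' x0 (T0 + s))))
        = ((Finset.range L).filter
        (fun s => v (T0 + s)
          = selEdge E δ ε p₀ (T0 + s) (deffuantTraj ε μ E v x0 (T0 + s)))) := by
      refine Finset.filter_congr fun s hs => ?_
      rw [Finset.mem_range] at hs
      rw [← htraj s (by omega), ← h (T0 + s) (by omega)]
    rw [this]
    exact h2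
end Sel

section Main
open scoped Classical
variable {V : Type*} [Fintype V] {W : Type*} [NormedAddCommGroup W] [InnerProductSpace ℝ W]
variable {Ω : Type*} [MeasurableSpace Ω]

lemma dSeq_prob_bound (P : Measure Ω) [IsProbabilityMeasure P] (e : ℕ → Ω → Sym2 V)
    (hmeas : ∀ t, @Measurable Ω (Sym2 V) _ ⊤ (e t))
    (hindep : iIndepFun (m := fun _ : ℕ => (⊤ : MeasurableSpace (Sym2 V))) e P)
    {N : ℕ} (hunif : ∀ t, ∀ p : Sym2 V, ¬ p.IsDiag → P {ω | e t ω = p} = ((N : ℝ≥0∞))⁻¹)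
    (ε : ℝ) (μ : ℕ → ℝ) (E : ℕ → Set (Sym2 V)) (x0 : V → W) {δ : ℝ} (hδ : 0 < δ)
    {p₀ : Sym2 V} (hp₀ : ¬ p₀.IsDiag) (T0 : ℕ) :
    ∀ L k : ℕ, P {ω | dSeq ε μ E x0 δ p₀ T0 L k (fun s => e s ω)}
      ≤ (((L + 1) ^ k : ℕ) : ℝ≥0∞) * (1 - (N : ℝ≥0∞)⁻¹) ^ (L - k) := by
  set r : ℝ≥0∞ := 1 - (N : ℝ≥0∞)⁻¹ with hr
  have hr1 : r ≤ 1 := tsub_le_self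
  intro L
  induction L with
  | zero =>
    intro k
    have huniv : {ω | dSeq ε μ E x0 δ p₀ T0 0 k (fun s => e s ω)} = Set.univ := by
      ext ω
      simp [dSeq]
    rw [huniv, measure_univ]
    simp
  | succ L ih =>
    intro k
    -- the key estimate at time T0 + L
    set Cp : (ℕ → Sym2 V) → Prop := fun v => dSeq ε μ E x0 δ p₀ T0 L k v ∧
      longS E δ ε (T0 + L) (deffuantTraj ε μ E v x0 (T0 + L)) with hCp
    set σf : (ℕ → Sym2 V) → Sym2 V := fun v =>
      selEdge E δ ε p₀ (T0 + L) (deffuantTraj ε μ E v x0 (T0 + L)) with hσf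
    have hCdep : ∀ v v' : ℕ → Sym2 V, (∀ s < T0 + L, v s = v' s) → Cp v → Cp v' := by
      rintro v v' hagree ⟨h1, h2⟩
      refine ⟨dSeq_congr ε μ E x0 δ p₀ T0 L k hagree h1, ?_⟩
      rwa [deffuantTraj_congr ε μ E x0 (v := v') (v' := v) fun s hs => (hagree s hs).symm]
    have hσdep : ∀ v v' : ℕ → Sym2 V, (∀ s < T0 + L, v s = v' s) → σf v = σf v' := by
      intro v v' hagree
      rw [hσf]
      simp only
      rw [deffuantTraj_congr ε μ E x0 (v := v) (v' := v') hagree]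
    have hσnd : ∀ v, ¬ (σf v).IsDiag := fun v => selEdge_not_isDiag E δ ε hp₀ _ _
    have hkey := deffuant_key_estimate P e hmeas hindep hunif (T0 + L) Cp σf p₀
      hCdep hσdep hσnd
    -- the set whose measure `hkey` bounds
    have hCsub : {ω | Cp (fun s => e s ω)} ⊆ {ω | dSeq ε μ E x0 δ p₀ T0 L k (fun s => e s ω)} :=
      fun ω h => h.1
    -- monotonicity of the count filters
    have hfilter_mono : ∀ (v : ℕ → Sym2 V),
        ((Finset.range L).filter (fun s => v (T0 + s)
          = selEdge E δ ε p₀ (T0 + s) (deffuantTraj ε μ E v x0 (T0 + s)))).card ≤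
        ((Finset.range (L + 1)).filter (fun s => v (T0 + s)
          = selEdge E δ ε p₀ (T0 + s) (deffuantTraj ε μ E v x0 (T0 + s)))).card := by
      intro v
      exact Finset.card_le_card
        (Finset.filter_subset_filter _ (Finset.range_subset_range.mpr (Nat.le_succ L)))
    have hcount_succ : ∀ (v : ℕ → Sym2 V),
        ((Finset.range (L + 1)).filter (fun s => v (T0 + s)
          = selEdge E δ ε p₀ (T0 + s) (deffuantTraj ε μ E v x0 (T0 + s)))).card =
        (if v (T0 + L) = selEdge E δ ε p₀ (T0 + L) (deffuantTraj ε μ E v x0 (T0 + L))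
          then 1 else 0) +
        ((Finset.range L).filter (fun s => v (T0 + s)
          = selEdge E δ ε p₀ (T0 + s) (deffuantTraj ε μ E v x0 (T0 + s)))).card := by
      intro v
      rw [Finset.range_add_one, Finset.filter_insert]
      split_ifs with h
      · rw [Finset.card_insert_of_notMem (by simp)]
        omega
      · omega
    match k with
    | 0 =>
      have hsub : {ω | dSeq ε μ E x0 δ p₀ T0 (L + 1) 0 (fun s => e s ω)} ⊆
          {ω | Cp (fun s => e s ω) ∧
            ¬ (e (T0 + L) ω = σf (fun s => e s ω))} := by
        intro ω hω
        simp only [Set.mem_setOf_eq, dSeq] at hω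
        obtain ⟨h1, h2⟩ := hω
        have hc := hcount_succ (fun s => e s ω)
        beta_reduce at hc
        simp only [Set.mem_setOf_eq, hCp, hσf, dSeq]
        refine ⟨⟨⟨fun s hs => h1 s (by omega), by omega⟩, h1 L (by omega)⟩, ?_⟩
        intro hsel
        rw [if_pos hsel] at hc
        omega
      calc P {ω | dSeq ε μ E x0 δ p₀ T0 (L + 1) 0 (fun s => e s ω)}
          ≤ P {ω | Cp (fun s => e s ω) ∧ ¬ (e (T0 + L) ω = σf (fun s => e s ω))} :=
            measure_mono hsub
        _ ≤ r * P {ω | Cp (fun s => e s ω)} := hkey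
        _ ≤ r * P {ω | dSeq ε μ E x0 δ p₀ T0 L 0 (fun s => e s ω)} :=
            mul_le_mul_right (measure_mono hCsub) r
        _ ≤ r * ((((L + 1) ^ 0 : ℕ) : ℝ≥0∞) * r ^ (L - 0)) := mul_le_mul_right (ih 0) r
        _ ≤ (((L + 1 + 1) ^ 0 : ℕ) : ℝ≥0∞) * r ^ (L + 1 - 0) := by
            simp [pow_succ, mul_comm]
    | k + 1 =>
      have hsub : {ω | dSeq ε μ E x0 δ p₀ T0 (L + 1) (k + 1) (fun s => e s ω)} ⊆
          {ω | Cp (fun s => e s ω) ∧ ¬ (e (T0 + L) ω = σf (fun s => e s ω))} ∪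
          {ω | dSeq ε μ E x0 δ p₀ T0 L k (fun s => e s ω)} := by
        intro ω hω
        simp only [Set.mem_setOf_eq, dSeq] at hω
        obtain ⟨h1, h2⟩ := hω
        have hc := hcount_succ (fun s => e s ω)
        beta_reduce at hc
        by_cases hsel : e (T0 + L) ω
            = selEdge E δ ε p₀ (T0 + L) (deffuantTraj ε μ E (fun s => e s ω) x0 (T0 + L))
        · refine Set.mem_union_right _ ?_
          simp only [Set.mem_setOf_eq, dSeq]
          rw [if_pos hsel] at hc
          exact ⟨fun s hs => h1 s (by omega), by omega⟩
        · refine Set.mem_union_left _ ?_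
          simp only [Set.mem_setOf_eq, hCp, hσf, dSeq]
          rw [if_neg hsel] at hc
          exact ⟨⟨⟨fun s hs => h1 s (by omega), by omega⟩, h1 L (by omega)⟩, hsel⟩
      have hnum : ((((L + 1) ^ (k + 1) : ℕ) : ℝ≥0∞)) * (r * r ^ (L - (k + 1)))
            + (((L + 1) ^ k : ℕ) : ℝ≥0∞) * r ^ (L - k)
          ≤ (((L + 1 + 1) ^ (k + 1) : ℕ) : ℝ≥0∞) * r ^ (L + 1 - (k + 1)) := by
        have hpow : r * r ^ (L - (k + 1)) ≤ r ^ (L - k) := by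
          rw [← pow_succ']
          exact pow_le_pow_of_le_one zero_le hr1 (by omega)
        have hLk : L + 1 - (k + 1) = L - k := by omega
        rw [hLk]
        calc (((L + 1) ^ (k + 1) : ℕ) : ℝ≥0∞) * (r * r ^ (L - (k + 1)))
              + (((L + 1) ^ k : ℕ) : ℝ≥0∞) * r ^ (L - k)
            ≤ (((L + 1) ^ (k + 1) : ℕ) : ℝ≥0∞) * r ^ (L - k)
              + (((L + 1) ^ k : ℕ) : ℝ≥0∞) * r ^ (L - k) :=
              add_le_add (mul_le_mul_right hpow _) le_rfl
          _ = ((((L + 1) ^ (k + 1) + (L + 1) ^ k : ℕ)) : ℝ≥0∞) * r ^ (L - k) := by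
              push_cast; ring
          _ ≤ (((L + 1 + 1) ^ (k + 1) : ℕ) : ℝ≥0∞) * r ^ (L - k) := by
              refine mul_le_mul_left ?_ _
              refine Nat.cast_le.mpr ?_
              calc (L + 1) ^ (k + 1) + (L + 1) ^ k
                  = (L + 1) ^ k * (L + 1 + 1) := by ring
                _ ≤ (L + 1 + 1) ^ k * (L + 1 + 1) :=
                    Nat.mul_le_mul_right _ (Nat.pow_le_pow_left (by omega) k)
                _ = (L + 1 + 1) ^ (k + 1) := by ring
      calc P {ω | dSeq ε μ E x0 δ p₀ T0 (L + 1) (k + 1) (fun s => e s ω)}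
          ≤ P ({ω | Cp (fun s => e s ω) ∧ ¬ (e (T0 + L) ω = σf (fun s => e s ω))} ∪
              {ω | dSeq ε μ E x0 δ p₀ T0 L k (fun s => e s ω)}) := measure_mono hsub
        _ ≤ P {ω | Cp (fun s => e s ω) ∧ ¬ (e (T0 + L) ω = σf (fun s => e s ω))}
            + P {ω | dSeq ε μ E x0 δ p₀ T0 L k (fun s => e s ω)} := measure_union_le _ _
        _ ≤ r * P {ω | Cp (fun s => e s ω)}
            + (((L + 1) ^ k : ℕ) : ℝ≥0∞) * r ^ (L - k) := add_le_add hkey (ih k)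
        _ ≤ r * ((((L + 1) ^ (k + 1) : ℕ) : ℝ≥0∞) * r ^ (L - (k + 1)))
            + (((L + 1) ^ k : ℕ) : ℝ≥0∞) * r ^ (L - k) := by
            refine add_le_add (mul_le_mul_right ?_ r) le_rfl
            exact (measure_mono hCsub).trans (ih (k + 1))
        _ ≤ (((L + 1 + 1) ^ (k + 1) : ℕ) : ℝ≥0∞) * r ^ (L + 1 - (k + 1)) := by
            calc r * ((((L + 1) ^ (k + 1) : ℕ) : ℝ≥0∞) * r ^ (L - (k + 1)))
                  + (((L + 1) ^ k : ℕ) : ℝ≥0∞) * r ^ (L - k)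
                = (((L + 1) ^ (k + 1) : ℕ) : ℝ≥0∞) * (r * r ^ (L - (k + 1)))
                  + (((L + 1) ^ k : ℕ) : ℝ≥0∞) * r ^ (L - k) := by ring
              _ ≤ _ := hnum

end Main

/-- Theorem 2 of the paper. If `liminf_{t → ∞} μ(t) > 0`, then for every
`δ > 0`, almost surely there is a time `t` at which every edge of the profile
`E(t) ∩ 𝓔(t)` has length at most `δ`. -/
theorem deffuant_profile_edges_short_in_finite_time
    {d : ℕ} (hd : 1 ≤ d) {V : Type*} [Fintype V] (hV : 2 ≤ Fintype.card V)
    {Ω : Type*} [MeasurableSpace Ω] (P : Measure Ω) [IsProbabilityMeasure P]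
    (e : ℕ → Ω → Sym2 V)
    (hmeas : ∀ t, @Measurable Ω (Sym2 V) _ ⊤ (e t))
    (hindep : iIndepFun (m := fun _ : ℕ => (⊤ : MeasurableSpace (Sym2 V))) e P)
    (hunif : ∀ t, ∀ p : Sym2 V, ¬ p.IsDiag →
      P {ω | e t ω = p} = ((Nat.card {q : Sym2 V // ¬ q.IsDiag} : ℝ≥0∞))⁻¹)
    (ε : ℝ) (hε : 0 < ε)
    (μ : ℕ → ℝ) (hμ : ∀ t, μ t ∈ Set.Icc (0 : ℝ) (1 / 2))
    (hliminf : 0 < Filter.liminf μ Filter.atTop)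
    (E : ℕ → Set (Sym2 V))
    (x0 : V → EuclideanSpace ℝ (Fin d))
    (δ : ℝ) (hδ : 0 < δ) :
    ∀ᵐ ω ∂P, ∃ t : ℕ, ∀ i j : V, s(i, j) ∈ E t →
      ‖deffuantTraj ε μ E (fun s => e s ω) x0 t i
          - deffuantTraj ε μ E (fun s => e s ω) x0 t j‖ ≤ ε →
      ‖deffuantTraj ε μ E (fun s => e s ω) x0 t i
          - deffuantTraj ε μ E (fun s => e s ω) x0 t j‖ ≤ δ := by
  classical
  -- a default non-diagonal pair
  obtain ⟨i₀, j₀, hij₀⟩ := Fintype.exists_pair_of_one_lt_card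
    (show 1 < Fintype.card V by omega)
  have hp₀ : ¬ (s(i₀, j₀) : Sym2 V).IsDiag := by rw [Sym2.mk_isDiag_iff]; exact hij₀
  set N : ℕ := Nat.card {q : Sym2 V // ¬ q.IsDiag} with hNdef
  have : Nonempty {q : Sym2 V // ¬ q.IsDiag} := ⟨⟨s(i₀, j₀), hp₀⟩⟩
  have hNpos : 0 < N := Nat.card_pos
  set q : ℝ≥0∞ := (N : ℝ≥0∞)⁻¹ with hqdef
  set r : ℝ≥0∞ := 1 - q with hrdef
  have hqpos : 0 < q := ENNReal.inv_pos.mpr (ENNReal.natCast_ne_top N)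
  have hq1 : q ≤ 1 := ENNReal.inv_le_one.mpr (by exact_mod_cast hNpos)
  have hrlt : r < 1 := ENNReal.sub_lt_self ENNReal.one_ne_top one_ne_zero hqpos.ne'
  have hrtop : r ≠ ∞ := (hrlt.trans_le le_top).ne
  set rt : ℝ := r.toReal with hrtdef
  have hrt0 : 0 ≤ rt := ENNReal.toReal_nonneg
  have hrt1 : rt < 1 := by
    have := (ENNReal.toReal_lt_toReal hrtop ENNReal.one_ne_top).mpr hrlt
    simpa using this
  -- the eventual lower bound on μ
  have hbdd : Filter.IsBoundedUnder (· ≥ ·) Filter.atTop μ :=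
    isBoundedUnder_of ⟨0, fun t => (hμ t).1⟩
  set c : ℝ := Filter.liminf μ Filter.atTop / 2 with hcdef
  have hc : 0 < c := half_pos hliminf
  have hev : ∀ᶠ t in Filter.atTop, c < μ t :=
    eventually_lt_of_lt_liminf (half_lt_self hliminf) hbdd
  obtain ⟨T0, hT0⟩ := Filter.eventually_atTop.mp hev
  have hT0' : ∀ t, T0 ≤ t → c ≤ μ t := fun t ht => (hT0 t ht).le
  have hκ : 0 < c * δ ^ 2 := by positivity
  set M : ℕ := ⌈deffuantEnergy x0 / (c * δ ^ 2)⌉₊ with hMdef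
  -- Claim A: if the profile always has a long edge, then the event `dSeq L M` occurs
  set Aset : Set Ω :=
    {ω | ∀ t : ℕ, longS E δ ε t (deffuantTraj ε μ E (fun s => e s ω) x0 t)} with hAdef
  have claimA : ∀ L : ℕ, Aset ⊆
      {ω | dSeq ε μ E x0 δ (s(i₀, j₀)) T0 L M (fun s => e s ω)} := by
    intro L ω hω
    have hω' : ∀ t : ℕ, longS E δ ε t (deffuantTraj ε μ E (fun s => e s ω) x0 t) := hω
    refine ⟨fun s _ => hω' (T0 + s), ?_⟩
    have hsubf : (Finset.range L).filter
        (fun s => (fun s' => e s' ω) (T0 + s)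
          = selEdge E δ ε (s(i₀, j₀)) (T0 + s)
            (deffuantTraj ε μ E (fun s' => e s' ω) x0 (T0 + s))) ⊆
        (Finset.range L).filter
        (fun s => goodDrop ε μ E x0 δ (T0 + s) (fun s' => e s' ω)) := by
      refine Finset.monotone_filter_right _ ?_
      intro s _ hsel
      exact selEdge_goodDrop ε μ E x0 hδ (hω' (T0 + s)) hsel
    have hcount := deffuant_drop_count ε μ E x0 hμ hc.le hδ.le hT0' (fun s' => e s' ω) L
    have hcard : ((Finset.range L).filter
        (fun s => goodDrop ε μ E x0 δ (T0 + s) (fun s' => e s' ω))).card ≤ M := by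
      have h1 : (((Finset.range L).filter
          (fun s => goodDrop ε μ E x0 δ (T0 + s) (fun s' => e s' ω))).card : ℝ)
          ≤ deffuantEnergy x0 / (c * δ ^ 2) := (le_div_iff₀ hκ).mpr hcount
      have h2 : deffuantEnergy x0 / (c * δ ^ 2) ≤ (M : ℝ) := Nat.le_ceil _
      exact_mod_cast h1.trans h2
    exact le_trans (Finset.card_le_card hsubf) hcard
  -- Claim B: probability bound
  have claimB := dSeq_prob_bound P e hmeas hindep hunif ε μ E x0 hδ hp₀ T0
  have hAle : ∀ L : ℕ, P Aset ≤ (((L + 1) ^ M : ℕ) : ℝ≥0∞) * r ^ (L - M) :=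
    fun L => (measure_mono (claimA L)).trans (claimB L M)
  -- the bound tends to zero
  have htend : Filter.Tendsto (fun L : ℕ => ((L : ℝ) + 1) ^ M * rt ^ (L - M))
      Filter.atTop (nhds 0) := by
    have hg : Filter.Tendsto (fun n : ℕ => ((n : ℝ) + M + 1) ^ M * rt ^ n)
        Filter.atTop (nhds 0) := by
      have hmain : Filter.Tendsto
          (fun n : ℕ => ((M : ℝ) + 2) ^ M * ((n : ℝ) ^ M * rt ^ n))
          Filter.atTop (nhds 0) := by
        have h0 := tendsto_pow_const_mul_const_pow_of_lt_one M hrt0 hrt1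
        simpa using h0.const_mul (((M : ℝ) + 2) ^ M)
      refine squeeze_zero' ?_ ?_ hmain
      · filter_upwards with n
        positivity
      · filter_upwards [Filter.eventually_ge_atTop 1] with n hn
        have hn1 : (1 : ℝ) ≤ n := by exact_mod_cast hn
        have h1 : (n : ℝ) + M + 1 ≤ ((M : ℝ) + 2) * n := by nlinarith [Nat.cast_nonneg (α := ℝ) M]
        have h2 : ((n : ℝ) + M + 1) ^ M ≤ (((M : ℝ) + 2) * n) ^ M :=
          pow_le_pow_left₀ (by positivity) h1 M
        calc ((n : ℝ) + M + 1) ^ M * rt ^ n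
            ≤ (((M : ℝ) + 2) * n) ^ M * rt ^ n :=
              mul_le_mul_of_nonneg_right h2 (pow_nonneg hrt0 n)
          _ = ((M : ℝ) + 2) ^ M * ((n : ℝ) ^ M * rt ^ n) := by rw [mul_pow]; ring
    have hcomp := hg.comp (tendsto_sub_atTop_nat M)
    refine hcomp.congr' ?_
    filter_upwards [Filter.eventually_ge_atTop M] with L hL
    have hLM : ((L - M : ℕ) : ℝ) = (L : ℝ) - M := by
      push_cast [Nat.cast_sub hL]
      ring
    simp only [Function.comp_apply, hLM]
    ring_nf
  -- conclude P Aset = 0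
  have hA0 : P Aset = 0 := by
    have h1 : ∀ L : ℕ, (P Aset).toReal ≤ ((L : ℝ) + 1) ^ M * rt ^ (L - M) := by
      intro L
      have hne : (((L + 1) ^ M : ℕ) : ℝ≥0∞) * r ^ (L - M) ≠ ∞ :=
        ENNReal.mul_ne_top (ENNReal.natCast_ne_top _) (ENNReal.pow_ne_top hrtop)
      have h2 := ENNReal.toReal_mono hne (hAle L)
      rwa [ENNReal.toReal_mul, ENNReal.toReal_pow, ENNReal.toReal_natCast,
        show (((L + 1) ^ M : ℕ) : ℝ) = ((L : ℝ) + 1) ^ M by push_cast; ring] at h2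
    have h3 : (P Aset).toReal ≤ 0 := ge_of_tendsto htend (Filter.Eventually.of_forall h1)
    have h4 : (P Aset).toReal = 0 := le_antisymm h3 ENNReal.toReal_nonneg
    rcases (ENNReal.toReal_eq_zero_iff _).mp h4 with h | h
    · exact h
    · exact absurd h (measure_ne_top P _)
  -- conclusion
  rw [ae_iff]
  refine measure_mono_null ?_ hA0
  intro ω hω
  simp only [Set.mem_setOf_eq] at hω ⊢
  push_neg at hω
  intro t
  obtain ⟨i, j, hmem, hup, hlow⟩ := hω t
  exact ⟨i, j, hmem, hlow, hup⟩
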